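/- For a set T of facilities, let A(T) denote the union of attraction sets (clients that have some facility of T accessible), and w(A(T)) its total weight. Let M be a minimum neighborhood set, i.e., a nonempty set minimizing w(A(T))/|T| over all nonempty T ⊆ F, with minimum ratio ρ = w(A(M))/|M|. Then in every client equilibrium σ, each facility j ∈ M has load exactly ℓ_j(σ) = ρ. -/
import Mathlib


open Finset

/-- Load of facility `j` under weight distribution `σ`. -/
def load {n k : ℕ} (σ : Fin n → Fin k → ℝ) (j : Fin k) : ℝ := ∑ i, σ i j

/-- A feasible client weight distribution: nonnegative, supported on accessible
facilities, and clients with a nonempty accessible set distribute their full weight. -/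
def Feasible {n k : ℕ} (w : Fin n → ℝ) (N : Fin n → Finset (Fin k))
    (σ : Fin n → Fin k → ℝ) : Prop :=
  (∀ i j, 0 ≤ σ i j) ∧
  (∀ i j, j ∉ N i → σ i j = 0) ∧
  (∀ i, (N i).Nonempty → ∑ j ∈ N i, σ i j = w i)

/-- Client equilibrium: no client puts positive weight on a facility while a
strictly less loaded accessible facility exists. -/
def ClientEq {n k : ℕ} (w : Fin n → ℝ) (N : Fin n → Finset (Fin k))
    (σ : Fin n → Fin k → ℝ) : Prop :=
  Feasible w N σ ∧
  ∀ i : Fin n, ∀ j ∈ N i, ∀ j' ∈ N i, 0 < σ i j → load σ j ≤ load σ j'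

/-- Total weight of the attraction set of a facility set `T`: clients having an
accessible facility in `T`. -/
def wA {n k : ℕ} (w : Fin n → ℝ) (N : Fin n → Finset (Fin k))
    (T : Finset (Fin k)) : ℝ :=
  ∑ i ∈ Finset.univ.filter (fun i => (N i ∩ T).Nonempty), w i

/-- In every client equilibrium, each facility of a minimum neighborhood set
has load exactly the minimum neighborhood ratio. -/
theorem minimum_neighborhood_set_load (n k : ℕ)
    (w : Fin n → ℝ) (hw : ∀ i, 0 < w i) (N : Fin n → Finset (Fin k))
    (M : Finset (Fin k)) (hM : M.Nonempty)
    (hmin : ∀ T : Finset (Fin k), T.Nonempty →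
      wA w N M / (M.card : ℝ) ≤ wA w N T / (T.card : ℝ))
    (σ : Fin n → Fin k → ℝ) (heq : ClientEq w N σ) :
    ∀ j ∈ M, load σ j = wA w N M / (M.card : ℝ) := by
  obtain ⟨⟨hnn, hsupp, htot⟩, hEq⟩ := heq
  set ρ : ℝ := wA w N M / (M.card : ℝ) with hρ
  -- Key lemma: for the set of facilities with load < c, wA equals sum of loads.
  have key : ∀ c : ℝ,
      wA w N (univ.filter fun j => load σ j < c)
        = ∑ j ∈ univ.filter (fun j => load σ j < c), load σ j := by
    intro c
    have hi : ∀ i : Fin n,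
        ∑ j ∈ univ.filter (fun j => load σ j < c), σ i j
          = if (N i ∩ univ.filter (fun j => load σ j < c)).Nonempty then w i else 0 := by
      intro i
      by_cases h : (N i ∩ univ.filter (fun j => load σ j < c)).Nonempty
      · rw [if_pos h]
        obtain ⟨j', hj'⟩ := h
        rw [mem_inter] at hj'
        have hj'c : load σ j' < c := (mem_filter.mp hj'.2).2
        have hzero : ∀ j ∈ N i, j ∉ univ.filter (fun j => load σ j < c) → σ i j = 0 := by
          intro j hj hjT
          by_contra hne
          have hpos : 0 < σ i j := lt_of_le_of_ne (hnn i j) (Ne.symm hne)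
          have hle := hEq i j hj j' hj'.1 hpos
          exact hjT (mem_filter.mpr ⟨mem_univ j, lt_of_le_of_lt hle hj'c⟩)
        have h1 : ∑ j ∈ univ.filter (fun j => load σ j < c), σ i j
            = ∑ j ∈ (univ.filter (fun j => load σ j < c)) ∩ N i, σ i j := by
          refine (Finset.sum_subset inter_subset_left ?_).symm
          intro j hj hjn
          exact hsupp i j (fun h' => hjn (mem_inter.mpr ⟨hj, h'⟩))
        have h2 : ∑ j ∈ (univ.filter (fun j => load σ j < c)) ∩ N i, σ i j
            = ∑ j ∈ N i, σ i j := by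
          refine Finset.sum_subset inter_subset_right ?_
          intro j hj hjn
          exact hzero j hj (fun h' => hjn (mem_inter.mpr ⟨h', hj⟩))
        rw [h1, h2, htot i ⟨j', hj'.1⟩]
      · rw [if_neg h]
        refine Finset.sum_eq_zero fun j hjT => ?_
        by_cases hj : j ∈ N i
        · exact absurd ⟨j, mem_inter.mpr ⟨hj, hjT⟩⟩ h
        · exact hsupp i j hj
    have hswap : ∑ j ∈ univ.filter (fun j => load σ j < c), load σ j
        = ∑ i, ∑ j ∈ univ.filter (fun j => load σ j < c), σ i j := by
      simp only [load]; rw [Finset.sum_comm]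
    rw [hswap, Finset.sum_congr rfl (fun i _ => hi i), Finset.sum_ite,
      Finset.sum_const_zero, add_zero, wA]
  -- Lower bound: every facility in M has load at least ρ.
  have hlb : ∀ j ∈ M, ρ ≤ load σ j := by
    intro j hjM
    by_contra hlt
    push_neg at hlt
    have hTne : (univ.filter fun j => load σ j < ρ).Nonempty :=
      ⟨j, mem_filter.mpr ⟨mem_univ j, hlt⟩⟩
    have hcard : (0 : ℝ) < ((univ.filter fun j => load σ j < ρ).card : ℝ) := by
      exact_mod_cast card_pos.mpr hTne
    have hsum : ∑ j' ∈ univ.filter (fun j => load σ j < ρ), load σ j'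
        < ((univ.filter fun j => load σ j < ρ).card : ℝ) * ρ := by
      have := Finset.sum_lt_sum_of_nonempty hTne
        (f := fun j' => load σ j') (g := fun _ => ρ)
        (fun j' hj' => (mem_filter.mp hj').2)
      simpa using this
    have h1 := hmin _ hTne
    rw [key ρ] at h1
    have h2 : (∑ j' ∈ univ.filter (fun j => load σ j < ρ), load σ j')
        / ((univ.filter fun j => load σ j < ρ).card : ℝ) < ρ := by
      rw [div_lt_iff₀ hcard]
      linarith [hsum]
    linarith
  -- Upper bound: total load on M is at most wA(M).
  have hub : ∑ j ∈ M, load σ j ≤ wA w N M := by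
    have hswap : ∑ j ∈ M, load σ j = ∑ i, ∑ j ∈ M, σ i j := by
      simp only [load]; rw [Finset.sum_comm]
    rw [hswap, wA, ← Finset.sum_filter_add_sum_filter_not univ
      (fun i => (N i ∩ M).Nonempty) (fun i => ∑ j ∈ M, σ i j)]
    have h2 : ∑ i ∈ univ.filter (fun i => ¬ (N i ∩ M).Nonempty), ∑ j ∈ M, σ i j = 0 := by
      refine Finset.sum_eq_zero fun i hi => Finset.sum_eq_zero fun j hjM => ?_
      rw [mem_filter] at hi
      by_cases hj : j ∈ N i
      · exact absurd ⟨j, mem_inter.mpr ⟨hj, hjM⟩⟩ hi.2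
      · exact hsupp i j hj
    rw [h2, add_zero]
    refine Finset.sum_le_sum fun i hi => ?_
    rw [mem_filter] at hi
    obtain ⟨j', hj'⟩ := hi.2
    rw [mem_inter] at hj'
    calc ∑ j ∈ M, σ i j = ∑ j ∈ M ∩ N i, σ i j := by
            refine (Finset.sum_subset inter_subset_left ?_).symm
            intro j hj hjn
            exact hsupp i j (fun h' => hjn (mem_inter.mpr ⟨hj, h'⟩))
      _ ≤ ∑ j ∈ N i, σ i j :=
            Finset.sum_le_sum_of_subset_of_nonneg inter_subset_right
              (fun j _ _ => hnn i j)
      _ = w i := htot i ⟨j', hj'.1⟩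
  have hMcard : (0 : ℝ) < (M.card : ℝ) := by exact_mod_cast card_pos.mpr hM
  have hρM : (M.card : ℝ) * ρ = wA w N M := by
    rw [hρ]; field_simp
  have hsum0 : ∑ j ∈ M, (load σ j - ρ) = 0 := by
    refine le_antisymm ?_ (Finset.sum_nonneg fun j hj => sub_nonneg.mpr (hlb j hj))
    rw [Finset.sum_sub_distrib, Finset.sum_const, nsmul_eq_mul]
    linarith [hub, hρM]
  intro j hjM
  have := (Finset.sum_eq_zero_iff_of_nonneg
    (fun j hj => sub_nonneg.mpr (hlb j hj))).mp hsum0 j hjM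
  linarith [this]
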